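/- Let h ∈ (0,1) and let F be the Lennard–Jones potential. Then for every r ∈ [1−h, 1) one has F''(r) ≥ (1−h)²/h > 0, and for every r ∈ (1−h, 1) one has F'(r) > 0. In particular F is strictly convex and strictly increasing on the interval (1−h, 1). -/

import Mathlib

/-- The Lennard--Jones potential `F(r) = -h log(1-r) - r³/3 - h (r²/2 + r)`. -/
noncomputable def FLJ (h r : ℝ) : ℝ := -h * Real.log (1 - r) - r^3/3 - h * (r^2/2 + r)

/-- Its first derivative on `[0,1)`: `F'(r) = h/(1-r) - r² - h (r+1)`. -/
noncomputable def FLJ' (h r : ℝ) : ℝ := h/(1-r) - r^2 - h * (r+1)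

/-- Its second derivative on `[0,1)`: `F''(r) = h/(1-r)² - 2r - h`. -/
noncomputable def FLJ'' (h r : ℝ) : ℝ := h/(1-r)^2 - 2*r - h

lemma hasDerivAt_FLJ (h r : ℝ) (hr : r < 1) : HasDerivAt (FLJ h) (FLJ' h r) r := by
  have h0 : (1 : ℝ) - r > 0 := by linarith
  have h1 : HasDerivAt (fun x : ℝ => 1 - x) (-1) r := by
    simpa using (hasDerivAt_id r).const_sub 1
  have h2 : HasDerivAt (fun x : ℝ => Real.log (1 - x)) ((1 - r)⁻¹ * (-1)) r :=
    (Real.hasDerivAt_log (ne_of_gt h0)).comp r h1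
  have h3 : HasDerivAt (fun x : ℝ => -h * Real.log (1 - x) - x^3/3 - h * (x^2/2 + x))
      (-h * ((1 - r)⁻¹ * (-1)) - (3 * r^2)/3 - h * (2 * r/2 + 1)) r := by
    have h4 : HasDerivAt (fun x : ℝ => x^3/3) ((3 * r^2)/3) r := by
      simpa using (hasDerivAt_pow 3 r).div_const 3
    have h5 : HasDerivAt (fun x : ℝ => x^2/2 + x) (2 * r/2 + 1) r := by
      exact (((hasDerivAt_pow 2 r).div_const 2).add (hasDerivAt_id' r)).congr_deriv (by norm_num)
    exact ((h2.const_mul (-h)).sub h4).sub (h5.const_mul h)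
  convert h3 using 1
  · rfl
  unfold FLJ'
  field_simp

lemma hasDerivAt_FLJ' (h r : ℝ) (hr : r < 1) : HasDerivAt (FLJ' h) (FLJ'' h r) r := by
  have h0 : (1 : ℝ) - r > 0 := by linarith
  have h1 : HasDerivAt (fun x : ℝ => 1 - x) (-1) r := by
    simpa using (hasDerivAt_id r).const_sub 1
  have h2 : HasDerivAt (fun x : ℝ => (1 - x)⁻¹) (-(-1) / (1 - r)^2) r :=
    h1.inv (ne_of_gt h0)
  have h3 : HasDerivAt (fun x : ℝ => h * (1 - x)⁻¹ - x^2 - h * (x + 1))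
      (h * (-(-1) / (1 - r)^2) - 2 * r - h * (1 + 0)) r := by
    have h4 : HasDerivAt (fun x : ℝ => x^2) (2 * r) r := by
      simpa using hasDerivAt_pow 2 r
    have h5 : HasDerivAt (fun x : ℝ => x + 1) (1 + 0) r := by
      simpa using (hasDerivAt_id r).add_const 1
    exact ((h2.const_mul h).sub h4).sub (h5.const_mul h)
  have heq : FLJ' h = fun x : ℝ => h * (1 - x)⁻¹ - x^2 - h * (x + 1) := by
    funext x; unfold FLJ'; rw [div_eq_mul_inv]
  rw [heq]
  convert h3 using 1
  unfold FLJ''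
  field_simp
  ring

/-- On `[1-h, 1)` one has `F'' ≥ (1-h)²/h > 0`, and `F' > 0` on `(1-h,1)`; in particular
`F` is strictly convex and strictly increasing on `(1-h, 1)`. -/
theorem LJ_convex_increasing (h : ℝ) (hh : h ∈ Set.Ioo (0:ℝ) 1) :
    (∀ r ∈ Set.Ico (1 - h) (1:ℝ), (1 - h)^2 / h ≤ FLJ'' h r) ∧
    0 < (1 - h)^2 / h ∧
    (∀ r ∈ Set.Ioo (1 - h) (1:ℝ), 0 < FLJ' h r) ∧
    StrictConvexOn ℝ (Set.Ioo (1 - h) 1) (FLJ h) ∧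
    StrictMonoOn (FLJ h) (Set.Ioo (1 - h) 1) := by
  obtain ⟨hh0, hh1⟩ := hh
  have key'' : ∀ r ∈ Set.Ico (1 - h) (1:ℝ), (1 - h)^2 / h ≤ FLJ'' h r := by
    rintro r ⟨hr1, hr2⟩
    have hs0 : (0:ℝ) < 1 - r := by linarith
    have hsh : 1 - r ≤ h := by linarith
    have hstep : ((1 - h)^2 + (2*r + h)*h)/h ≤ h/(1-r)^2 := by
      rw [div_le_div_iff₀ hh0 (by positivity)]
      have haux : 0 ≤ h + (1 - r) - 2*h*(1-r)^2 := by
        nlinarith [mul_pos hs0 hs0, sq_nonneg (1 - r), mul_pos hh0 hs0]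
      nlinarith [mul_nonneg (sub_nonneg.2 hsh) haux, mul_pos hs0 hs0]
    have hre : ((1 - h)^2 + (2*r + h)*h)/h = (1 - h)^2/h + 2*r + h := by
      field_simp; ring
    unfold FLJ''
    linarith [hstep, hre.symm.le]
  have hpos : 0 < (1 - h)^2 / h := div_pos (pow_pos (by linarith) 2) hh0
  have key' : ∀ r ∈ Set.Ioo (1 - h) (1:ℝ), 0 < FLJ' h r := by
    rintro r ⟨hr1, hr2⟩
    have hs0 : (0:ℝ) < 1 - r := by linarith
    have hsh : 1 - r < h := by linarith
    have hr0 : 0 < r := by linarith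
    have e : FLJ' h r = r^2 * (h - 1 + r) / (1 - r) := by
      unfold FLJ'; field_simp; ring
    rw [e]
    exact div_pos (mul_pos (pow_pos hr0 2) (by linarith)) hs0
  have hFpos : ∀ r ∈ Set.Ioo (1 - h) (1:ℝ), 0 < FLJ'' h r := by
    rintro r hr
    exact lt_of_lt_of_le hpos (key'' r ⟨le_of_lt hr.1, hr.2⟩)
  have hderiv1 : ∀ x ∈ Set.Ioo (1 - h) (1:ℝ), deriv (FLJ h) x = FLJ' h x := by
    intro x hx
    exact (hasDerivAt_FLJ h x hx.2).deriv
  have hcont : ContinuousOn (FLJ h) (Set.Ioo (1 - h) 1) := by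
    intro x hx
    exact ((hasDerivAt_FLJ h x hx.2).continuousAt).continuousWithinAt
  have hconv : Convex ℝ (Set.Ioo (1 - h) (1:ℝ)) := convex_Ioo _ _
  have hint : interior (Set.Ioo (1 - h) (1:ℝ)) = Set.Ioo (1 - h) 1 := interior_Ioo
  have hmono : StrictMonoOn (FLJ h) (Set.Ioo (1 - h) 1) := by
    apply strictMonoOn_of_deriv_pos hconv hcont
    intro x hx
    rw [hint] at hx
    rw [hderiv1 x hx]
    exact key' x hx
  have hstrict : StrictConvexOn ℝ (Set.Ioo (1 - h) 1) (FLJ h) := by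
    apply strictConvexOn_of_deriv2_pos hconv hcont
    intro x hx
    rw [hint] at hx
    have hEq : deriv (FLJ h) =ᶠ[nhds x] FLJ' h := by
      filter_upwards [Iio_mem_nhds hx.2] with y hy
      exact (hasDerivAt_FLJ h y hy).deriv
    have : deriv (deriv (FLJ h)) x = FLJ'' h x := by
      rw [hEq.deriv_eq]
      exact (hasDerivAt_FLJ' h x hx.2).deriv
    simp only [Function.iterate_succ, Function.iterate_zero, Function.comp_apply, id_eq]
    rw [this]
    exact hFpos x hx
  exact ⟨key'', hpos, key', hstrict, hmono⟩
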